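/- Let V be a finite-dimensional real vector space and let g₀ and g₁ be two inner products on V such that ‖g₁ − g₀‖_{g₀} ≤ 1/2, where ‖·‖_{g₀} denotes the norm on symmetric bilinear forms induced by g₀. Then for every symmetric bilinear form h on V, |tr_{g₁}(h) − tr_{g₀}(h)| ≤ 2 · ‖g₁ − g₀‖_{g₀} · ‖h‖_{g₀}. -/

import Mathlib

open Finset

private lemma aux_trace_cs {n : ℕ} (A E Hm : Fin n → Fin n → ℝ)
    (hrel : ∀ i j, A i j + ∑ k, A i k * E k j = Hm i j)
    (hclose : Real.sqrt (∑ i, ∑ j, E i j ^ 2) ≤ 1 / 2) :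
    |∑ i, ∑ k, A i k * E k i| ≤
      2 * Real.sqrt (∑ i, ∑ j, E i j ^ 2) * Real.sqrt (∑ i, ∑ j, Hm i j ^ 2) := by
  set SE := ∑ i, ∑ j, E i j ^ 2 with hSEdef
  set SH := ∑ i, ∑ j, Hm i j ^ 2 with hSHdef
  have hSE0 : 0 ≤ SE := Finset.sum_nonneg fun _ _ => Finset.sum_nonneg fun _ _ => sq_nonneg _
  have hSH0 : 0 ≤ SH := Finset.sum_nonneg fun _ _ => Finset.sum_nonneg fun _ _ => sq_nonneg _
  -- row bound
  have row : ∀ i, ∑ j, A i j ^ 2 ≤ 4 * ∑ j, Hm i j ^ 2 := by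
    intro i
    set sa := ∑ j, A i j ^ 2 with hsadef
    set sh := ∑ j, Hm i j ^ 2 with hshdef
    have hsa0 : 0 ≤ sa := Finset.sum_nonneg fun _ _ => sq_nonneg _
    have hsh0 : 0 ≤ sh := Finset.sum_nonneg fun _ _ => sq_nonneg _
    have hsw : ∑ j, (∑ k, A i k * E k j) ^ 2 ≤ sa * SE := by
      calc ∑ j, (∑ k, A i k * E k j) ^ 2
          ≤ ∑ j, sa * ∑ k, E k j ^ 2 :=
            Finset.sum_le_sum fun j _ => Finset.sum_mul_sq_le_sq_mul_sq _ _ _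
        _ = sa * ∑ j, ∑ k, E k j ^ 2 := by rw [← Finset.mul_sum]
        _ = sa * SE := by rw [hSEdef, Finset.sum_comm]
    have hdecomp : sa = (∑ j, A i j * Hm i j) - ∑ j, A i j * (∑ k, A i k * E k j) := by
      rw [← Finset.sum_sub_distrib]
      exact Finset.sum_congr rfl fun j _ => by rw [← hrel i j]; ring
    have cs1 : ∑ j, A i j * Hm i j ≤ Real.sqrt sa * Real.sqrt sh :=
      Real.sum_mul_le_sqrt_mul_sqrt _ _ _
    have cs2 : -(∑ j, A i j * (∑ k, A i k * E k j)) ≤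
        Real.sqrt sa * Real.sqrt (sa * SE) := by
      have h1 := Real.sum_mul_le_sqrt_mul_sqrt Finset.univ (fun j => A i j)
        (fun j => -(∑ k, A i k * E k j))
      simp only [mul_neg, neg_sq, Finset.sum_neg_distrib] at h1
      refine h1.trans ?_
      exact mul_le_mul_of_nonneg_left (Real.sqrt_le_sqrt hsw) (Real.sqrt_nonneg _)
    have hsqSE : Real.sqrt (sa * SE) ≤ Real.sqrt sa * (1 / 2) := by
      rw [Real.sqrt_mul hsa0]
      exact mul_le_mul_of_nonneg_left hclose (Real.sqrt_nonneg _)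
    have hmulsa : Real.sqrt sa * Real.sqrt sa = sa := Real.mul_self_sqrt hsa0
    have hx : sa ≤ 2 * (Real.sqrt sa * Real.sqrt sh) := by
      nlinarith [Real.sqrt_nonneg sa, Real.sqrt_nonneg sh,
        mul_le_mul_of_nonneg_left hsqSE (Real.sqrt_nonneg sa)]
    have hsq_sa : Real.sqrt sa ^ 2 = sa := Real.sq_sqrt hsa0
    have hsq_sh : Real.sqrt sh ^ 2 = sh := Real.sq_sqrt hsh0
    nlinarith [sq_nonneg (Real.sqrt sa - 2 * Real.sqrt sh), Real.sqrt_nonneg sa,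
      Real.sqrt_nonneg sh]
  have hSA : (∑ i, ∑ j, A i j ^ 2) ≤ 4 * SH := by
    calc ∑ i, ∑ j, A i j ^ 2 ≤ ∑ i, 4 * ∑ j, Hm i j ^ 2 := Finset.sum_le_sum fun i _ => row i
      _ = 4 * SH := by rw [← Finset.mul_sum, hSHdef]
  have hSA0 : 0 ≤ ∑ i, ∑ j, A i j ^ 2 :=
    Finset.sum_nonneg fun _ _ => Finset.sum_nonneg fun _ _ => sq_nonneg _
  -- Cauchy-Schwarz on pairs
  have hS2 : (∑ i, ∑ k, A i k * E k i) ^ 2 ≤ (∑ i, ∑ j, A i j ^ 2) * SE := by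
    have := Finset.sum_mul_sq_le_sq_mul_sq Finset.univ
      (fun p : Fin n × Fin n => A p.1 p.2) (fun p : Fin n × Fin n => E p.2 p.1)
    simp only [Fintype.sum_prod_type] at this
    refine this.trans_eq ?_
    congr 1
    rw [hSEdef]
    exact Finset.sum_comm
  have habs : |∑ i, ∑ k, A i k * E k i| ≤
      Real.sqrt (∑ i, ∑ j, A i j ^ 2) * Real.sqrt SE := by
    rw [← Real.sqrt_sq_eq_abs, ← Real.sqrt_mul hSA0]
    exact Real.sqrt_le_sqrt hS2
  have hsqrtSA : Real.sqrt (∑ i, ∑ j, A i j ^ 2) ≤ 2 * Real.sqrt SH := by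
    have : Real.sqrt (4 * SH) = 2 * Real.sqrt SH := by
      rw [show (4 : ℝ) = 2 ^ 2 by norm_num, Real.sqrt_mul (by positivity), Real.sqrt_sq (by norm_num)]
    calc Real.sqrt (∑ i, ∑ j, A i j ^ 2) ≤ Real.sqrt (4 * SH) := Real.sqrt_le_sqrt hSA
      _ = 2 * Real.sqrt SH := this
  calc |∑ i, ∑ k, A i k * E k i| ≤ Real.sqrt (∑ i, ∑ j, A i j ^ 2) * Real.sqrt SE := habs
    _ ≤ (2 * Real.sqrt SH) * Real.sqrt SE :=
        mul_le_mul_of_nonneg_right hsqrtSA (Real.sqrt_nonneg _)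
    _ = 2 * Real.sqrt SE * Real.sqrt SH := by ring

/-- Trace comparison: if `g₀, g₁` are inner products on a finite-dimensional real vector
space `V` with `‖g₁ - g₀‖_{g₀} ≤ 1/2` (Frobenius norm w.r.t. a `g₀`-orthonormal basis `b`),
then for every symmetric bilinear form `h` with `g₀`-trace endomorphism `H₀` and
`g₁`-trace endomorphism `H₁`, the traces differ by at most `2‖g₁-g₀‖_{g₀}‖h‖_{g₀}`. -/
theorem trace_comparison
    {V : Type*} [AddCommGroup V] [Module ℝ V] [FiniteDimensional ℝ V]
    {n : ℕ} (b : Module.Basis (Fin n) ℝ V)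
    (g₀ g₁ h : LinearMap.BilinForm ℝ V)
    (hg₀sym : ∀ x y, g₀ x y = g₀ y x) (hg₁sym : ∀ x y, g₁ x y = g₁ y x)
    (hhsym : ∀ x y, h x y = h y x)
    (hg₀pos : ∀ x, x ≠ 0 → 0 < g₀ x x) (hg₁pos : ∀ x, x ≠ 0 → 0 < g₁ x x)
    (hortho : ∀ i j, g₀ (b i) (b j) = if i = j then 1 else 0)
    (H₀ H₁ : V →ₗ[ℝ] V)
    (hH₀ : ∀ x y, g₀ (H₀ x) y = h x y)
    (hH₁ : ∀ x y, g₁ (H₁ x) y = h x y)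
    (hclose : Real.sqrt (∑ i, ∑ j, (g₁ (b i) (b j) - g₀ (b i) (b j)) ^ 2) ≤ 1 / 2) :
    |LinearMap.trace ℝ V H₁ - LinearMap.trace ℝ V H₀| ≤
      2 * Real.sqrt (∑ i, ∑ j, (g₁ (b i) (b j) - g₀ (b i) (b j)) ^ 2)
        * Real.sqrt (∑ i, ∑ j, (h (b i) (b j)) ^ 2) := by
  classical
  have hrepr : ∀ (x : V) (k : Fin n), g₀ x (b k) = b.repr x k := by
    intro x k
    conv_lhs => rw [← b.sum_repr x]
    simp [-Module.Basis.sum_repr, map_sum, LinearMap.sum_apply, hortho, mul_ite]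
  have hexp : ∀ (B : LinearMap.BilinForm ℝ V) (i : Fin n) (y : V),
      B (H₁ (b i)) y = ∑ k, b.repr (H₁ (b i)) k * B (b k) y := by
    intro B i y
    conv_lhs => rw [← b.sum_repr (H₁ (b i))]
    simp [-Module.Basis.sum_repr, map_sum, LinearMap.sum_apply]
  have hrel : ∀ i j, b.repr (H₁ (b i)) j
      + ∑ k, b.repr (H₁ (b i)) k * (g₁ (b k) (b j) - g₀ (b k) (b j)) = h (b i) (b j) := by
    intro i j
    have key : ∑ k, b.repr (H₁ (b i)) k * (g₁ (b k) (b j) - g₀ (b k) (b j))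
        = g₁ (H₁ (b i)) (b j) - g₀ (H₁ (b i)) (b j) := by
      rw [hexp g₁ i (b j), hexp g₀ i (b j), ← Finset.sum_sub_distrib]
      exact Finset.sum_congr rfl fun k _ => by ring
    rw [key, ← hrepr (H₁ (b i)) j, hH₁]
    ring
  have htr1 : LinearMap.trace ℝ V H₁ = ∑ i, b.repr (H₁ (b i)) i := by
    rw [LinearMap.trace_eq_matrix_trace ℝ b H₁]
    simp [Matrix.trace, Matrix.diag, LinearMap.toMatrix_apply]
  have htr0 : LinearMap.trace ℝ V H₀ = ∑ i, h (b i) (b i) := by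
    rw [LinearMap.trace_eq_matrix_trace ℝ b H₀]
    simp only [Matrix.trace, Matrix.diag, LinearMap.toMatrix_apply]
    exact Finset.sum_congr rfl fun i _ => by rw [← hrepr, hH₀]
  have hdiff : LinearMap.trace ℝ V H₁ - LinearMap.trace ℝ V H₀
      = -∑ i, ∑ k, b.repr (H₁ (b i)) k * (g₁ (b k) (b i) - g₀ (b k) (b i)) := by
    rw [htr1, htr0, ← Finset.sum_sub_distrib, ← Finset.sum_neg_distrib]
    exact Finset.sum_congr rfl fun i _ => by rw [← hrel i i]; ring
  rw [hdiff, abs_neg]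
  exact aux_trace_cs (fun i k => b.repr (H₁ (b i)) k)
    (fun i j => g₁ (b i) (b j) - g₀ (b i) (b j)) (fun i j => h (b i) (b j)) hrel hclose
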